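/- If t ≥ 3 is odd and d ≤ (t+1)/2, then the d-distance chromatic number of G(ℤ,{2,t}) is at most 1 + d(d+1). -/

import Mathlib

def distG (t : ℤ) : SimpleGraph ℤ :=
  SimpleGraph.fromRel (fun i j => |i - j| = 2 ∨ |i - j| = t)

lemma adj_two (t : ℤ) (x : ℤ) : (distG t).Adj x (x + 2) := by
  rw [distG, SimpleGraph.fromRel_adj]
  refine ⟨by omega, Or.inl (Or.inl ?_)⟩
  rw [show x - (x+2) = -2 by ring]; norm_num

lemma adj_t (t : ℤ) (h3 : 3 ≤ t) (x : ℤ) : (distG t).Adj x (x + t) := by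
  rw [distG, SimpleGraph.fromRel_adj]
  refine ⟨by omega, Or.inl (Or.inr ?_)⟩
  rw [abs_eq (by omega)]; omega

lemma adj_cases (t : ℤ) {a b : ℤ} (h : (distG t).Adj a b) :
    b - a = 2 ∨ b - a = -2 ∨ b - a = t ∨ b - a = -t := by
  rw [distG, SimpleGraph.fromRel_adj] at h
  obtain ⟨-, h | h⟩ := h <;> rcases h with h | h <;> cases abs_cases (a - b) <;> cases abs_cases (b - a) <;> omega

lemma walk_rep (t : ℤ) : ∀ {u v : ℤ} (p : (distG t).Walk u v),
    ∃ α β : ℤ, v - u = 2*α + t*β ∧ |α| + |β| ≤ (p.length : ℤ) := by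
  intro u v p
  induction p with
  | nil => exact ⟨0, 0, by ring, by simp⟩
  | @cons a b c h p ih =>
    obtain ⟨α, β, hab, hn⟩ := ih
    simp only [SimpleGraph.Walk.length_cons]
    have hsum : c - a = (c - b) + (b - a) := by ring
    rcases adj_cases t h with h' | h' | h' | h'
    · refine ⟨α + 1, β, ?_, ?_⟩
      · rw [hsum, hab, h']; ring
      · push_cast; cases abs_cases α <;> cases abs_cases β <;> cases abs_cases (α+1) <;> omega
    · refine ⟨α - 1, β, ?_, ?_⟩
      · rw [hsum, hab, h']; ring
      · push_cast; cases abs_cases α <;> cases abs_cases β <;> cases abs_cases (α-1) <;> omega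
    · refine ⟨α, β + 1, ?_, ?_⟩
      · rw [hsum, hab, h']; ring
      · push_cast; cases abs_cases α <;> cases abs_cases β <;> cases abs_cases (β+1) <;> omega
    · refine ⟨α, β - 1, ?_, ?_⟩
      · rw [hsum, hab, h']; ring
      · push_cast; cases abs_cases α <;> cases abs_cases β <;> cases abs_cases (β-1) <;> omega

lemma reach_sub_two (t : ℤ) (y : ℤ) (k : ℕ) : (distG t).Reachable y (y - 2*k) := by
  induction k with
  | zero => simpa using SimpleGraph.Reachable.refl y
  | succ n ih =>
    refine ih.trans ?_
    have h := (adj_two t (y - 2*n - 2)).toWalk.reachable.symm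
    have he : y - 2*(n+1:ℕ) = y - 2*n - 2 := by push_cast; ring
    have he2 : y - 2*n - 2 + 2 = y - 2*(n:ℕ) := by ring
    rw [he]
    rw [he2] at h
    exact h

lemma reach_add_one (t : ℤ) (ht : Odd t) (h3 : 3 ≤ t) (x : ℤ) :
    (distG t).Reachable x (x + 1) := by
  obtain ⟨k, hk⟩ := ht
  have hk0 : 0 ≤ k := by omega
  have h1 := (adj_t t h3 x).toWalk.reachable
  have h2 := reach_sub_two t (x + t) k.toNat
  have he : x + t - 2 * (k.toNat : ℤ) = x + 1 := by
    rw [Int.toNat_of_nonneg hk0]; omega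
  rw [he] at h2
  exact h1.trans h2

lemma reach_all (t : ℤ) (ht : Odd t) (h3 : 3 ≤ t) (u v : ℤ) :
    (distG t).Reachable u v := by
  have key : ∀ n : ℤ, (distG t).Reachable u (u + n) := by
    intro n
    induction n using Int.induction_on with
    | zero => simpa using SimpleGraph.Reachable.refl u
    | succ n ih =>
      have := reach_add_one t ht h3 (u + n)
      have he : u + (n+1:ℤ) = u + n + 1 := by ring
      rw [he]; exact ih.trans this
    | pred n ih =>
      have := (reach_add_one t ht h3 (u + (-n-1))).symm
      have he : u + (-(n:ℤ)-1) + 1 = u + -(n:ℤ) := by ring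
      rw [he] at this
      exact ih.trans this
  have := key (v - u)
  simpa using this

def enc (x : ℤ) : ℕ := if 0 < x then (2*x - 1).toNat else (-(2*x)).toNat

def dec (n : ℕ) : ℤ := if n % 2 = 1 then ((n:ℤ) + 1) / 2 else -((n:ℤ) / 2)

lemma dec_enc (x : ℤ) : dec (enc x) = x := by
  unfold enc dec
  split_ifs with h1 h2 h2 <;> omega

lemma dec_inj : Function.Injective dec := by
  intro m n h
  unfold dec at h
  split_ifs at h <;> omega

lemma dec_lt {m n : ℕ} (h : m < n) :
    (0 < dec n → dec m < dec n) ∧ (dec n ≤ 0 → dec n < dec m) := by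
  unfold dec
  split_ifs <;> omega

noncomputable def Bset (d : ℕ) : Finset (ℤ × ℤ) :=
  (Finset.range (d+1)).biUnion (fun b =>
    (if b = 0 then Finset.Icc (1:ℤ) d else Finset.Icc (-((d-b:ℕ):ℤ)) ((d-b:ℕ):ℤ)).image
      (fun a => (a, (b:ℤ))))

lemma sum_odd (d : ℕ) : ∑ j ∈ Finset.range d, (2*j+1) = d^2 := by
  induction d with
  | zero => simp
  | succ n ih => rw [Finset.sum_range_succ, ih]; ring

lemma card_Bset (d : ℕ) : (Bset d).card ≤ d*(d+1) := by
  refine le_trans (Finset.card_biUnion_le) ?_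
  have hrow : ∀ b ∈ Finset.range (d+1),
      ((if b = 0 then Finset.Icc (1:ℤ) d else Finset.Icc (-((d-b:ℕ):ℤ)) ((d-b:ℕ):ℤ)).image
        (fun a => (a, (b:ℤ)))).card ≤ if b = 0 then d else 2*(d-b)+1 := by
    intro b _
    refine le_trans (Finset.card_image_le) ?_
    split_ifs with h
    · rw [Int.card_Icc]; omega
    · rw [Int.card_Icc]; omega
  refine le_trans (Finset.sum_le_sum hrow) ?_
  rw [Finset.sum_range_succ']
  have h1 : ∀ i ∈ Finset.range d,
      (if i + 1 = 0 then d else 2*(d-(i+1))+1) = 2*(d-1-i)+1 := by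
    intro i _
    rw [if_neg (Nat.succ_ne_zero i)]
    omega
  rw [Finset.sum_congr rfl h1, Finset.sum_range_reflect (fun j => 2*j+1) d, sum_odd,
    if_pos rfl]
  nlinarith [sq_nonneg d]

lemma mem_Bset {d : ℕ} {α β : ℤ} (hβ : 0 ≤ β) (hn : |α| + β ≤ d) (h0 : β = 0 → 1 ≤ α) :
    (α, β) ∈ Bset d := by
  have habs := abs_nonneg α
  rw [Bset, Finset.mem_biUnion]
  refine ⟨β.toNat, Finset.mem_range.mpr (by omega), ?_⟩
  rw [Finset.mem_image]
  refine ⟨α, ?_, by rw [Int.toNat_of_nonneg hβ]⟩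
  split_ifs with h
  · have : β = 0 := by omega
    rw [Finset.mem_Icc]
    have := h0 this
    cases abs_cases α <;> omega
  · have hβ1 : 1 ≤ β := by omega
    rw [Finset.mem_Icc]
    have hc : ((d - β.toNat : ℕ) : ℤ) = (d:ℤ) - β := by omega
    rw [hc]
    cases abs_cases α <;> omega

def conflict (t : ℤ) (d : ℕ) (u v : ℤ) : Prop :=
  ∃ p : ℤ × ℤ, v - u = 2*p.1 + t*p.2 ∧ |p.1| + |p.2| ≤ (d:ℤ)

open Classical in
noncomputable def repPair (t : ℤ) (d : ℕ) (u v : ℤ) : ℤ × ℤ :=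
  if h : conflict t d u v then h.choose else 0

lemma repPair_spec {t : ℤ} {d : ℕ} {u v : ℤ} (h : conflict t d u v) :
    v - u = 2*(repPair t d u v).1 + t*(repPair t d u v).2 ∧
      |(repPair t d u v).1| + |(repPair t d u v).2| ≤ (d:ℤ) := by
  rw [repPair, dif_pos h]
  exact h.choose_spec

lemma signPos {t : ℤ} {d : ℕ} (ht1 : (1:ℤ) ≤ t) (h2d : 2*(d:ℤ) ≤ t + 1) {α β : ℤ}
    (hn : |α| + |β| ≤ (d:ℤ)) (hs : 0 < 2*α + t*β) :
    0 ≤ β ∧ (β = 0 → 1 ≤ α) ∧ |α| + β ≤ (d:ℤ) := by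
  rcases le_or_gt 0 β with hb | hb
  · refine ⟨hb, ?_, ?_⟩
    · intro h0
      rw [h0] at hs
      simp at hs
      omega
    · cases abs_cases β <;> omega
  · exfalso
    have hb1 : β ≤ -1 := by omega
    have h1 : t*β ≤ t*(-1) := by
      apply mul_le_mul_of_nonneg_left hb1 (by omega)
    have h2 : α ≤ |α| := le_abs_self α
    have h3 : |β| = -β := abs_of_neg hb
    linarith

open Classical in
noncomputable def badIdx (t : ℤ) (d : ℕ) (n : ℕ) : Finset ℕ :=
  (Finset.range n).filter (fun m => conflict t d (dec m) (dec n))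

open Classical in
lemma mem_badIdx {t : ℤ} {d : ℕ} {n m : ℕ} :
    m ∈ badIdx t d n ↔ m < n ∧ conflict t d (dec m) (dec n) := by
  rw [badIdx, Finset.mem_filter, Finset.mem_range]

lemma card_badIdx (t : ℤ) (d : ℕ) (ht1 : (1:ℤ) ≤ t) (h2d : 2*(d:ℤ) ≤ t + 1) (n : ℕ) :
    (badIdx t d n).card ≤ d*(d+1) := by
  classical
  refine le_trans (Finset.card_le_card_of_injOn
    (fun m => if 0 < dec n then repPair t d (dec m) (dec n)
      else (-(repPair t d (dec m) (dec n)).1, -(repPair t d (dec m) (dec n)).2)) ?_ ?_)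
    (card_Bset d)
  · intro m hm
    dsimp only
    obtain ⟨hmn, hc⟩ := mem_badIdx.mp hm
    obtain ⟨hval, hnorm⟩ := repPair_spec hc
    have hlt := dec_lt hmn
    by_cases hp : 0 < dec n
    · rw [if_pos hp]
      have hs : 0 < 2*(repPair t d (dec m) (dec n)).1 + t*(repPair t d (dec m) (dec n)).2 := by
        rw [← hval]
        have := hlt.1 hp
        omega
      obtain ⟨s1, s2, s3⟩ := signPos ht1 h2d hnorm hs
      exact mem_Bset s1 s3 s2
    · rw [if_neg hp]
      push_neg at hp
      have hs : 0 < 2*(-(repPair t d (dec m) (dec n)).1) + t*(-(repPair t d (dec m) (dec n)).2) := by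
        have h4 : 2*(-(repPair t d (dec m) (dec n)).1) + t*(-(repPair t d (dec m) (dec n)).2)
            = -(dec n - dec m) := by rw [hval]; ring
        rw [h4]
        have := hlt.2 hp
        omega
      have hnorm' : |-(repPair t d (dec m) (dec n)).1| + |-(repPair t d (dec m) (dec n)).2| ≤ (d:ℤ) := by
        rw [abs_neg, abs_neg]; exact hnorm
      obtain ⟨s1, s2, s3⟩ := signPos ht1 h2d hnorm' hs
      exact mem_Bset s1 s3 s2
  · intro m1 hm1 m2 hm2 heq
    obtain ⟨hmn1, hc1⟩ := mem_badIdx.mp hm1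
    obtain ⟨hmn2, hc2⟩ := mem_badIdx.mp hm2
    obtain ⟨hval1, -⟩ := repPair_spec hc1
    obtain ⟨hval2, -⟩ := repPair_spec hc2
    simp only at heq
    have hpair : repPair t d (dec m1) (dec n) = repPair t d (dec m2) (dec n) := by
      by_cases hp : 0 < dec n
      · rwa [if_pos hp, if_pos hp] at heq
      · rw [if_neg hp, if_neg hp] at heq
        have h1 := congrArg Prod.fst heq
        have h2 := congrArg Prod.snd heq
        simp only at h1 h2
        exact Prod.ext (by omega) (by omega)
    have : dec n - dec m1 = dec n - dec m2 := by rw [hval1, hval2, hpair]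
    exact dec_inj (by omega : dec m1 = dec m2)

lemma exists_spare {d : ℕ} (s : Finset (Fin (1 + d*(d+1)))) (h : s.card ≤ d*(d+1)) :
    ∃ c, c ∉ s := by
  by_contra hall
  push_neg at hall
  have : Finset.univ ⊆ s := fun c _ => hall c
  have hcard := Finset.card_le_card this
  rw [Finset.card_univ, Fintype.card_fin] at hcard
  omega

noncomputable def greedy (t : ℤ) (d : ℕ) (ht1 : (1:ℤ) ≤ t) (h2d : 2*(d:ℤ) ≤ t + 1) :
    ℕ → Fin (1 + d*(d+1))
  | n =>
    Classical.choose (exists_spare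
      ((badIdx t d n).attach.image
        (fun (m : {x // x ∈ badIdx t d n}) => greedy t d ht1 h2d m.1))
      (le_trans Finset.card_image_le
        (by rw [Finset.card_attach]; exact card_badIdx t d ht1 h2d n)))
  decreasing_by all_goals exact (mem_badIdx.mp m.2).1

lemma greedy_spec (t : ℤ) (d : ℕ) (ht1 : (1:ℤ) ≤ t) (h2d : 2*(d:ℤ) ≤ t + 1)
    (n m : ℕ) (hm : m ∈ badIdx t d n) :
    greedy t d ht1 h2d m ≠ greedy t d ht1 h2d n := by
  intro heq
  have hspec := Classical.choose_spec (exists_spare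
      ((badIdx t d n).attach.image
        (fun (m : {x // x ∈ badIdx t d n}) => greedy t d ht1 h2d m.1))
      (le_trans Finset.card_image_le
        (by rw [Finset.card_attach]; exact card_badIdx t d ht1 h2d n)))
  apply hspec
  rw [Finset.mem_image]
  refine ⟨⟨m, hm⟩, Finset.mem_attach _ _, ?_⟩
  rw [heq]
  rw [greedy]

theorem stmt14 (t : ℤ) (ht : Odd t) (h3 : 3 ≤ t) (d : ℕ) (hd : (d : ℤ) ≤ (t + 1) / 2) :
    ∃ f : ℤ → Fin (1 + d * (d + 1)), ∀ u v : ℤ, u ≠ v → f u = f v →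
      d < (distG t).dist u v := by
  have ht1 : (1:ℤ) ≤ t := by omega
  have h2d : 2*(d:ℤ) ≤ t + 1 := by
    obtain ⟨k, hk⟩ := ht
    omega
  refine ⟨fun x => greedy t d ht1 h2d (enc x), ?_⟩
  intro u v huv hfeq
  by_contra hdist
  push_neg at hdist
  obtain ⟨p, hp⟩ := (reach_all t ht h3 u v).exists_walk_length_eq_dist
  obtain ⟨α, β, hval, hn⟩ := walk_rep t p
  have hnd : |α| + |β| ≤ (d:ℤ) := by
    refine le_trans hn ?_
    exact_mod_cast Nat.cast_le.mpr (hp ▸ hdist)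
  have hcuv : conflict t d u v := ⟨(α, β), hval, hnd⟩
  have hcvu : conflict t d v u := by
    refine ⟨(-α, -β), ?_, ?_⟩
    · simp only
      rw [show u - v = -(v - u) by ring, hval]; ring
    · simp only [abs_neg]; exact hnd
  have hne : enc u ≠ enc v := by
    intro h
    apply huv
    rw [← dec_enc u, ← dec_enc v, h]
  rcases lt_or_gt_of_ne hne with hlt | hlt
  · exact greedy_spec t d ht1 h2d (enc v) (enc u)
      (mem_badIdx.mpr ⟨hlt, by rwa [dec_enc, dec_enc]⟩) hfeq
  · exact greedy_spec t d ht1 h2d (enc u) (enc v)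
      (mem_badIdx.mpr ⟨hlt, by rwa [dec_enc, dec_enc]⟩) hfeq.symm
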